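/- Let O be the free abelian group on generators {x_n : n ∈ ℤ} ∪ {y_n : n ∈ ℤ}, S ⊆ O the subgroup generated by x_m - x_{m-2} and x_{m-1} + x_{m-2} + y_m for m ∈ ℤ, and let c = (2-g)·x_0 + (1-g)·x_{-1} for an integer g. Then c ∉ S unless 2-g = 0 and 1-g = 0 simultaneously (which is impossible); in particular c ∉ S for every integer g, so the coset c + S is a nontrivial coset of S in O. -/
import Mathlib


/-- The free abelian group on `{x_n}_{n∈ℤ} ∪ {y_n}_{n∈ℤ}`. -/
abbrev O : Type := (ℤ ⊕ ℤ) →₀ ℤ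

/-- The generator `x_n`. -/
noncomputable def x (n : ℤ) : O := Finsupp.single (Sum.inl n) 1

/-- The generator `y_n`. -/
noncomputable def y (n : ℤ) : O := Finsupp.single (Sum.inr n) 1

/-- The subgroup generated by the elements `x_m - x_{m-2}` and `x_{m-1} + x_{m-2} + y_m`. -/
noncomputable def S : AddSubgroup O :=
  AddSubgroup.closure ((Set.range fun m : ℤ => x m - x (m - 2)) ∪
    (Set.range fun m : ℤ => x (m - 1) + x (m - 2) + y m))

/-- Weight function: x_n ↦ 1 if n even, -1 if odd; y_n ↦ 0. -/
def w : ℤ ⊕ ℤ → ℤ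
  | Sum.inl n => if n % 2 = 0 then 1 else -1
  | Sum.inr _ => 0

/-- The test homomorphism. -/
noncomputable def f : O →+ ℤ :=
  Finsupp.liftAddHom (fun i => zmultiplesHom ℤ (w i))

lemma f_single (i : ℤ ⊕ ℤ) (z : ℤ) : f (Finsupp.single i z) = z * w i := by
  simp [f, zmultiplesHom, smul_eq_mul]

lemma f_x (n : ℤ) : f (x n) = if n % 2 = 0 then 1 else -1 := by
  simp [x, f_single, w]

lemma f_y (n : ℤ) : f (y n) = 0 := by
  simp [y, f_single, w]

theorem c_not_mem_S (g : ℤ) : (2 - g) • x 0 + (1 - g) • x (-1) ∉ S := by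
  intro h
  have hS : S ≤ f.ker := by
    rw [S, AddSubgroup.closure_le]
    rintro _ (⟨m, rfl⟩ | ⟨m, rfl⟩) <;>
      simp only [AddMonoidHom.mem_ker, SetLike.mem_coe, map_sub, map_add, f_x, f_y]
    · rcases Int.emod_two_eq m with hm | hm <;> simp [hm]
    · rcases Int.emod_two_eq m with hm | hm
      · have h1 : (m - 1) % 2 = 1 := by omega
        have h2 : (m - 2) % 2 = 0 := by omega
        simp [h1, h2]
      · have h1 : (m - 1) % 2 = 0 := by omega
        have h2 : (m - 2) % 2 = 1 := by omega
        simp [h1, h2]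
  have := hS h
  rw [AddMonoidHom.mem_ker] at this
  simp only [map_add, map_zsmul, f_x] at this
  norm_num at this
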